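/- Let N be a phylogenetic network on X and let T be a rooted binary phylogenetic X-tree having a cherry {a, b}. If {a, b} is also a cherry in N, let N' and T' be obtained from N and T respectively by deleting leaf b and its incident arc and contracting the resulting degree-two vertex. Then N displays T if and only if N' displays T'. -/

import Mathlib

/-- A directed graph with a distinguished vertex set, arc set and root,
intended to model (binary) phylogenetic networks. Since arcs form a
`Finset` of ordered pairs, there are no parallel arcs. -/
structure Net (V : Type) [DecidableEq V] where
  verts : Finset V
  arcs : Finset (V × V)
  root : V

variable {V : Type} [DecidableEq V]

namespace Net

def Arc (N : Net V) (u v : V) : Prop := (u, v) ∈ N.arcs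

def outdeg (N : Net V) (v : V) : ℕ := (N.arcs.filter (fun e => e.1 = v)).card

def indeg (N : Net V) (v : V) : ℕ := (N.arcs.filter (fun e => e.2 = v)).card

def IsLeaf (N : Net V) (v : V) : Prop := v ∈ N.verts ∧ N.outdeg v = 0

def IsRetic (N : Net V) (v : V) : Prop :=
  v ∈ N.verts ∧ N.indeg v = 2 ∧ N.outdeg v = 1

def IsTreeVtx (N : Net V) (v : V) : Prop :=
  v ∈ N.verts ∧ N.indeg v = 1 ∧ N.outdeg v = 2

/-- The set of leaves (out-degree-zero vertices); this is the taxa set `X`. -/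
def leaves (N : Net V) : Finset V := N.verts.filter (fun v => N.outdeg v = 0)

/-- The set of reticulation vertices. -/
def retics (N : Net V) : Finset V :=
  N.verts.filter (fun v => N.indeg v = 2 ∧ N.outdeg v = 1)

/-- `u` is an ancestor of `v`: there is a directed path from `u` to `v`.
(Reflexive, as in the reachability order.) -/
def Ancestor (N : Net V) (u v : V) : Prop := Relation.ReflTransGen N.Arc u v

/-- `IsPathList N u v l` : `l` is the list of vertices of a directed path
from `u` to `v` in `N`. -/
inductive IsPathList (N : Net V) : V → V → List V → Prop
  | nil (v : V) : IsPathList N v v [v]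
  | cons {u w x : V} {l : List V} : N.Arc u w → IsPathList N w x l →
      IsPathList N u x (u :: l)

/-- The leaf `ℓ` verifies the vertex `v`: every directed path from the root
to `ℓ` passes through `v`. -/
def Verifies (N : Net V) (ℓ v : V) : Prop :=
  ∀ l : List V, N.IsPathList N.root ℓ l → v ∈ l

def Visible (N : Net V) (v : V) : Prop := ∃ ℓ, N.IsLeaf ℓ ∧ N.Verifies ℓ v

def ReticVisible (N : Net V) : Prop := ∀ v, N.IsRetic v → N.Visible v

/-- `N` is a (binary) phylogenetic network: a rooted acyclic digraph with no
parallel arcs in which the root has in-degree zero and out-degree two, every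
other vertex is a leaf (in-degree one, out-degree zero), a tree vertex
(in-degree one, out-degree two) or a reticulation (in-degree two, out-degree
one); if there is a single vertex the network has no arcs. -/
def IsPhylo (N : Net V) : Prop :=
  N.root ∈ N.verts ∧
  (∀ e ∈ N.arcs, e.1 ∈ N.verts ∧ e.2 ∈ N.verts) ∧
  (∀ v : V, ¬ Relation.TransGen N.Arc v v) ∧
  (∀ v ∈ N.verts, N.Ancestor N.root v) ∧
  (if N.verts.card = 1 then N.arcs = ∅
   else
    N.indeg N.root = 0 ∧ N.outdeg N.root = 2 ∧
    ∀ v ∈ N.verts, v ≠ N.root →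
      (N.indeg v = 1 ∧ N.outdeg v = 0) ∨
      (N.indeg v = 1 ∧ N.outdeg v = 2) ∨
      (N.indeg v = 2 ∧ N.outdeg v = 1))

end Net

/-- The internal vertices of a path given as a list of vertices. -/
def internalVerts {V : Type} (l : List V) : List V := (l.drop 1).dropLast

/-- `N.Displays T corr` : some subgraph of `N` is a subdivision of `T`; it is
witnessed by an embedding `f` of the vertices of `T` into `N` (with each leaf
`w` of `T` sent to a vertex related to it by the leaf correspondence `corr`)
together with, for every arc `e` of `T`, a directed path `P e` in `N` joining
the images of its endpoints, these paths being internally disjoint from one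
another and from the images of the vertices of `T`. -/
def Net.Displays {V W : Type} [DecidableEq V] [DecidableEq W]
    (N : Net V) (T : Net W) (corr : W → V → Prop) : Prop :=
  ∃ (f : W → V) (P : W × W → List V),
    Set.InjOn f {w | w ∈ T.verts} ∧
    (∀ w, T.IsLeaf w → corr w (f w)) ∧
    (∀ e ∈ T.arcs, N.IsPathList (f e.1) (f e.2) (P e) ∧ 2 ≤ (P e).length) ∧
    (∀ e ∈ T.arcs, ∀ x ∈ internalVerts (P e), ∀ w ∈ T.verts, f w ≠ x) ∧
    (∀ e ∈ T.arcs, ∀ e' ∈ T.arcs, e ≠ e' →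
      ∀ x ∈ internalVerts (P e), x ∉ internalVerts (P e'))

/-- `c` is a bijective correspondence between the leaves of `T` and the
leaves of `N` (both leaf sets being labelled by the same taxa set `X`). -/
def LeafCorr {V W : Type} [DecidableEq V] [DecidableEq W]
    (T : Net W) (N : Net V) (c : W → V) : Prop :=
  (∀ w, T.IsLeaf w → N.IsLeaf (c w)) ∧
  (∀ w w', T.IsLeaf w → T.IsLeaf w' → c w = c w' → w = w') ∧
  (∀ v, N.IsLeaf v → ∃ w, T.IsLeaf w ∧ c w = v)

/-- Delete a vertex together with its incident arcs. -/
def Net.delVert {V : Type} [DecidableEq V] (N : Net V) (b : V) : Net V :=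
  ⟨N.verts.erase b, N.arcs.filter (fun e => e.1 ≠ b ∧ e.2 ≠ b), N.root⟩

/-- Contract (suppress) all degree-two vertices (in-degree one and out-degree
one): the remaining vertices are joined by an arc whenever there is a
directed path between them all of whose internal vertices are degree-two.
Since arcs form a `Finset`, any parallel arcs arising are automatically
replaced by a single arc. -/
noncomputable def Net.suppress {V : Type} [DecidableEq V] (N : Net V) :
    Net V where
  verts := N.verts.filter (fun x => ¬ (N.indeg x = 1 ∧ N.outdeg x = 1))
  arcs := by
    classical
    exact (N.verts ×ˢ N.verts).filter (fun e =>
      ¬ (N.indeg e.1 = 1 ∧ N.outdeg e.1 = 1) ∧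
      ¬ (N.indeg e.2 = 1 ∧ N.outdeg e.2 = 1) ∧
      ∃ l : List V, N.IsPathList e.1 e.2 l ∧ 2 ≤ l.length ∧
        ∀ x ∈ (l.drop 1).dropLast, N.indeg x = 1 ∧ N.outdeg x = 1)
  root := N.root


section Aux
set_option linter.unusedSectionVars false

variable {V : Type} [DecidableEq V]

namespace Net

variable {M M' : Net V}

lemma IsPathList.ne_nil {u v : V} {l : List V} (h : M.IsPathList u v l) : l ≠ [] := by
  cases h <;> simp

lemma IsPathList.head_eq {u v : V} {l : List V} (h : M.IsPathList u v l) :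
    l.head? = some u := by
  cases h <;> rfl

lemma IsPathList.snoc {u v w : V} {l : List V} (h : M.IsPathList u v l)
    (ha : M.Arc v w) : M.IsPathList u w (l ++ [w]) := by
  induction h with
  | nil v => exact .cons ha (.nil w)
  | cons ha' _ ih => exact .cons ha' (ih ha)

lemma IsPathList.penult {u v : V} {l : List V} (h : M.IsPathList u v l)
    (hl : 2 ≤ l.length) :
    ∃ l0 x, l = l0 ++ [x, v] ∧ M.Arc x v ∧ M.IsPathList u x (l0 ++ [x]) := by
  induction h with
  | nil v => simp at hl
  | @cons u w x l ha h' ih =>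
    cases h' with
    | nil => exact ⟨[], u, rfl, ha, .nil u⟩
    | @cons u2 w2 x2 l2 ha2 h2 =>
      obtain ⟨l0, y, hl0, hay, hp⟩ := ih (by simpa using Nat.one_le_of_lt (List.length_pos_iff.2 h2.ne_nil))
      exact ⟨u :: l0, y, by rw [hl0]; rfl, hay, .cons ha hp⟩

lemma IsPathList.decomp {u v : V} {l : List V} (h : M.IsPathList u v l)
    (hl : 2 ≤ l.length) : l = u :: (internalVerts l ++ [v]) := by
  cases h with
  | nil => simp at hl
  | @cons u w x l' ha h' =>
    have h1 : l'.getLast? = some v := by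
      clear hl ha
      induction h' with
      | nil v => rfl
      | @cons a b c l2 ha2 h2 ih =>
        rw [List.getLast?_cons, ih]
        cases h2 <;> simp
    have h2 : l' ≠ [] := h'.ne_nil
    have h3 : l'.dropLast ++ [v] = l' := by
      rw [List.getLast?_eq_getLast h2, Option.some_inj] at h1
      conv_rhs => rw [← List.dropLast_append_getLast h2]
      rw [h1]
    show u :: l' = u :: ((u :: l').drop 1).dropLast ++ [v]
    simp only [List.drop_one, List.tail_cons]
    rw [← h3]
    simp

lemma IsPathList.transfer {u v : V} {l : List V} (h : M.IsPathList u v l)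
    (harc : ∀ a ∈ l, ∀ b ∈ l, M.Arc a b → M'.Arc a b) : M'.IsPathList u v l := by
  induction h with
  | nil v => exact .nil v
  | @cons a b c l2 ha h2 ih =>
    refine .cons (harc a (by simp) b ?_ ha) (ih fun x hx y hy => harc x (by simp [hx]) y (by simp [hy]))
    cases h2 <;> simp

lemma IsPathList.mem_arc {u v x : V} {l : List V} (h : M.IsPathList u v l)
    (hl : 2 ≤ l.length) (hx : x ∈ l) : ∃ y, M.Arc x y ∨ M.Arc y x := by
  induction h with
  | nil v => simp at hl
  | @cons a b c l2 ha h2 ih =>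
    rcases List.mem_cons.1 hx with rfl | hx'
    · exact ⟨b, Or.inl ha⟩
    · cases h2 with
      | nil => simp at hx'; exact hx' ▸ ⟨a, Or.inr ha⟩
      | cons ha2 h3 => exact ih (by simpa using Nat.one_le_of_lt (List.length_pos_iff.2 h3.ne_nil)) hx'

lemma IsPathList.first_arc {u v : V} {l : List V} (h : M.IsPathList u v l)
    (hl : 2 ≤ l.length) : ∃ y, M.Arc u y := by
  cases h with
  | nil => simp at hl
  | cons ha _ => exact ⟨_, ha⟩


end Net

lemma internalVerts_pair (u v : V) : internalVerts [u, v] = [] := rfl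

lemma internalVerts_append_pair (l0 : List V) (x v : V) :
    internalVerts (l0 ++ [x, v]) = (l0 ++ [x]).drop 1 := by
  unfold internalVerts
  rw [show l0 ++ [x, v] = (l0 ++ [x]) ++ [v] by simp]
  rw [List.drop_append_of_le_length (by simp), List.dropLast_concat]

lemma internalVerts_subset {l : List V} {x : V} (h : x ∈ internalVerts l) : x ∈ l := by
  unfold internalVerts at h
  exact List.drop_subset 1 l (List.dropLast_subset _ h)

lemma dropLast_append_pair (l0 : List V) (x v : V) :
    (l0 ++ [x, v]).dropLast = l0 ++ [x] := by
  rw [show l0 ++ [x, v] = (l0 ++ [x]) ++ [v] by simp, List.dropLast_concat]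

end Aux

section Cherry
set_option linter.unusedSectionVars false
set_option maxHeartbeats 1000000

variable {V : Type} [DecidableEq V]

namespace Net

variable {M : Net V} {la lb p gp u v : V}

lemma outdeg_eq_zero_iff {M : Net V} {v : V} :
    M.outdeg v = 0 ↔ ∀ y, (v, y) ∉ M.arcs := by
  unfold outdeg
  rw [Finset.card_eq_zero, Finset.filter_eq_empty_iff]
  constructor
  · intro h y hy; exact h hy rfl
  · intro h e he hev; exact h e.2 (by rw [← hev]; exact he)

lemma indeg_pos_of_mem {M : Net V} {x v : V} (h : (x, v) ∈ M.arcs) : M.indeg v ≠ 0 := by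
  intro h0
  unfold indeg at h0
  rw [Finset.card_eq_zero] at h0
  have hm : (x, v) ∈ M.arcs.filter (fun e => e.2 = v) := Finset.mem_filter.2 ⟨h, rfl⟩
  rw [h0] at hm
  exact Finset.notMem_empty _ hm

lemma indeg_unique {M : Net V} {x v : V} (h1 : M.indeg v = 1) (hx : (x, v) ∈ M.arcs) :
    ∀ y, (y, v) ∈ M.arcs → y = x := by
  intro y hy
  obtain ⟨a, ha⟩ := Finset.card_eq_one.1 h1
  have h2 : (x, v) ∈ M.arcs.filter (fun e => e.2 = v) := Finset.mem_filter.2 ⟨hx, rfl⟩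
  have h3 : (y, v) ∈ M.arcs.filter (fun e => e.2 = v) := Finset.mem_filter.2 ⟨hy, rfl⟩
  rw [ha, Finset.mem_singleton] at h2 h3
  have := h3.trans h2.symm
  exact (Prod.mk.injEq _ _ _ _ ▸ this).1

lemma outdeg_two_cases {M : Net V} {p la lb : V} (h2 : M.outdeg p = 2)
    (ha : (p, la) ∈ M.arcs) (hb : (p, lb) ∈ M.arcs) (hab : la ≠ lb) :
    ∀ y, (p, y) ∈ M.arcs → y = la ∨ y = lb := by
  intro y hy
  have hsub : ({(p, la), (p, lb)} : Finset (V × V)) ⊆ M.arcs.filter (fun e => e.1 = p) := by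
    intro e he
    rcases Finset.mem_insert.1 he with rfl | he
    · exact Finset.mem_filter.2 ⟨ha, rfl⟩
    · rw [Finset.mem_singleton] at he; subst he; exact Finset.mem_filter.2 ⟨hb, rfl⟩
  have hcard : (M.arcs.filter (fun e => e.1 = p)).card ≤ ({(p, la), (p, lb)} : Finset (V × V)).card := by
    rw [show (M.arcs.filter (fun e => e.1 = p)).card = 2 from h2]
    rw [Finset.card_insert_of_notMem (by simp [hab]), Finset.card_singleton]
  have heq := Finset.eq_of_subset_of_card_le hsub hcard
  have hy' : (p, y) ∈ ({(p, la), (p, lb)} : Finset (V × V)) := by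
    rw [heq]; exact Finset.mem_filter.2 ⟨hy, rfl⟩
  rcases Finset.mem_insert.1 hy' with h | h
  · exact Or.inl (Prod.mk.injEq _ _ _ _ ▸ h).2
  · rw [Finset.mem_singleton] at h; exact Or.inr (Prod.mk.injEq _ _ _ _ ▸ h).2

lemma phylo_deg {M : Net V} (hM : M.IsPhylo) (hne : M.arcs.Nonempty) :
    M.indeg M.root = 0 ∧ M.outdeg M.root = 2 ∧
    ∀ v ∈ M.verts, v ≠ M.root →
      (M.indeg v = 1 ∧ M.outdeg v = 0) ∨
      (M.indeg v = 1 ∧ M.outdeg v = 2) ∨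
      (M.indeg v = 2 ∧ M.outdeg v = 1) := by
  obtain ⟨-, -, -, -, h5⟩ := hM
  by_cases hc : M.verts.card = 1
  · rw [if_pos hc] at h5
    exact absurd h5 hne.ne_empty
  · rwa [if_neg hc] at h5

structure CherryData (M : Net V) (la lb p gp : V) : Prop where
  acyc : ∀ v, ¬ Relation.TransGen M.Arc v v
  endpoints : ∀ e ∈ M.arcs, e.1 ∈ M.verts ∧ e.2 ∈ M.verts
  hpa : (p, la) ∈ M.arcs
  hpb : (p, lb) ∈ M.arcs
  hgp : (gp, p) ∈ M.arcs
  la_mem : la ∈ M.verts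
  lb_mem : lb ∈ M.verts
  p_mem : p ∈ M.verts
  gp_mem : gp ∈ M.verts
  ne_pla : p ≠ la
  ne_plb : p ≠ lb
  ne_ab : la ≠ lb
  ne_gpp : gp ≠ p
  ne_gpla : gp ≠ la
  ne_gplb : gp ≠ lb
  hproot : p ≠ M.root
  la_out : M.outdeg la = 0
  lb_out : M.outdeg lb = 0
  in_la : ∀ x, (x, la) ∈ M.arcs → x = p
  in_lb : ∀ x, (x, lb) ∈ M.arcs → x = p
  in_p : ∀ x, (x, p) ∈ M.arcs → x = gp
  out_p : ∀ y, (p, y) ∈ M.arcs → y = la ∨ y = lb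
  p_indeg : M.indeg p = 1
  p_outdeg : M.outdeg p = 2
  no11 : ∀ v ∈ M.verts, ¬ (M.indeg v = 1 ∧ M.outdeg v = 1)
  root_out : M.outdeg M.root = 2
  root_in : M.indeg M.root = 0
  tri : ∀ v ∈ M.verts, v ≠ M.root →
      (M.indeg v = 1 ∧ M.outdeg v = 0) ∨
      (M.indeg v = 1 ∧ M.outdeg v = 2) ∨
      (M.indeg v = 2 ∧ M.outdeg v = 1)

lemma mkCherryData (hM : M.IsPhylo) (hla : M.IsLeaf la) (hlb : M.IsLeaf lb)
    (hab : la ≠ lb) (hpa : M.Arc p la) (hpb : M.Arc p lb) (hproot : p ≠ M.root) :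
    ∃ gp, CherryData M la lb p gp := by
  obtain ⟨hrin, hrout, htri⟩ := phylo_deg hM ⟨_, hpa⟩
  obtain ⟨hroot, hend, hacyc, hanc, -⟩ := hM
  have noself : ∀ x, (x, x) ∉ M.arcs := fun x hx => hacyc x (Relation.TransGen.single hx)
  have hpmem : p ∈ M.verts := (hend _ hpa).1
  have hlamem : la ∈ M.verts := (hend _ hpa).2
  have hlbmem : lb ∈ M.verts := (hend _ hpb).2
  -- leaves are not root
  have hlar : la ≠ M.root := fun h => indeg_pos_of_mem hpa (h ▸ hrin)
  have hlbr : lb ≠ M.root := fun h => indeg_pos_of_mem hpb (h ▸ hrin)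
  have hla1 : M.indeg la = 1 := by
    rcases htri la hlamem hlar with h | h | h
    · exact h.1
    · exact absurd hla.2 (h.2 ▸ two_ne_zero)
    · exact absurd hla.2 (h.2 ▸ one_ne_zero)
  have hlb1 : M.indeg lb = 1 := by
    rcases htri lb hlbmem hlbr with h | h | h
    · exact h.1
    · exact absurd hlb.2 (h.2 ▸ two_ne_zero)
    · exact absurd hlb.2 (h.2 ▸ one_ne_zero)
  -- p degrees
  have hpout2 : 2 ≤ M.outdeg p := by
    have hsub : ({(p, la), (p, lb)} : Finset (V × V)) ⊆ M.arcs.filter (fun e => e.1 = p) := by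
      intro e he
      rcases Finset.mem_insert.1 he with rfl | he
      · exact Finset.mem_filter.2 ⟨hpa, rfl⟩
      · rw [Finset.mem_singleton] at he; subst he; exact Finset.mem_filter.2 ⟨hpb, rfl⟩
    calc 2 = ({(p, la), (p, lb)} : Finset (V × V)).card := by
            rw [Finset.card_insert_of_notMem (by simp [hab]), Finset.card_singleton]
      _ ≤ _ := Finset.card_le_card hsub
  have hpdeg : M.indeg p = 1 ∧ M.outdeg p = 2 := by
    rcases htri p hpmem hproot with h | h | h
    · omega
    · exact h
    · omega
  -- grandparent
  have : (M.arcs.filter (fun e => e.2 = p)).Nonempty := by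
    rw [← Finset.card_pos]
    have h1 := hpdeg.1
    unfold indeg at h1
    omega
  obtain ⟨e, he⟩ := this
  obtain ⟨hegp, hep⟩ := Finset.mem_filter.1 he
  set gp := e.1 with hgpdef
  have hgp : (gp, p) ∈ M.arcs := by
    rwa [show (gp, p) = e by rw [hgpdef, ← hep]]
  have no11 : ∀ v ∈ M.verts, ¬ (M.indeg v = 1 ∧ M.outdeg v = 1) := by
    intro v hv ⟨h1, h2⟩
    by_cases hvr : v = M.root
    · rw [hvr, hrin] at h1; omega
    · rcases htri v hv hvr with h | h | h <;> omega
  refine ⟨gp, ⟨hacyc, hend, hpa, hpb, hgp, hlamem, hlbmem, hpmem, (hend _ hgp).1,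
    ?_, ?_, hab, ?_, ?_, ?_, hproot, hla.2, hlb.2,
    indeg_unique hla1 hpa, indeg_unique hlb1 hpb, indeg_unique hpdeg.1 hgp,
    outdeg_two_cases hpdeg.2 hpa hpb hab, hpdeg.1, hpdeg.2, no11, hrout, hrin, htri⟩⟩
  · rintro rfl; exact noself _ hpa
  · rintro rfl; exact noself _ hpb
  · rintro rfl; exact noself _ hgp
  · rintro rfl; exact hacyc _ (Relation.TransGen.head hgp (Relation.TransGen.single hpa))
  · rintro rfl; exact hacyc _ (Relation.TransGen.head hgp (Relation.TransGen.single hpb))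

variable {x y a b : V} {l : List V}

lemma CherryData.noself (hC : CherryData M la lb p gp) : ∀ x, (x, x) ∉ M.arcs :=
  fun x hx => hC.acyc x (Relation.TransGen.single hx)

lemma CherryData.arcs1 (hC : CherryData M la lb p gp) :
    (M.delVert lb).arcs = M.arcs.erase (p, lb) := by
  ext ⟨a, b⟩
  simp only [delVert, Finset.mem_filter, Finset.mem_erase]
  constructor
  · rintro ⟨he, h1, h2⟩
    exact ⟨fun h => h2 (congrArg Prod.snd h), he⟩
  · rintro ⟨hne, he⟩
    refine ⟨he, fun h1 => Net.outdeg_eq_zero_iff.1 hC.lb_out b (h1 ▸ he), fun h2 => ?_⟩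
    subst h2
    exact hne (by rw [hC.in_lb a he])

lemma CherryData.mem_arcs1 (hC : CherryData M la lb p gp) :
    (a, b) ∈ (M.delVert lb).arcs ↔ ((a, b) ≠ (p, lb) ∧ (a, b) ∈ M.arcs) := by
  rw [hC.arcs1, Finset.mem_erase]

lemma CherryData.indeg1 (hC : CherryData M la lb p gp) (hv : v ≠ lb) :
    (M.delVert lb).indeg v = M.indeg v := by
  unfold indeg
  rw [hC.arcs1, Finset.filter_erase, Finset.erase_eq_of_notMem]
  simp only [Finset.mem_filter, not_and]
  exact fun _ h => absurd h.symm hv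

lemma CherryData.outdeg1 (hC : CherryData M la lb p gp) (hv : v ≠ p) :
    (M.delVert lb).outdeg v = M.outdeg v := by
  unfold outdeg
  rw [hC.arcs1, Finset.filter_erase, Finset.erase_eq_of_notMem]
  simp only [Finset.mem_filter, not_and]
  exact fun _ h => absurd h.symm hv

lemma CherryData.out_filter_p (hC : CherryData M la lb p gp) :
    M.arcs.filter (fun e => e.1 = p) = {(p, la), (p, lb)} := by
  ext ⟨a, b⟩
  simp only [Finset.mem_filter, Finset.mem_insert, Finset.mem_singleton, Prod.mk.injEq]
  constructor
  · rintro ⟨he, rfl⟩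
    rcases hC.out_p b he with rfl | rfl
    · exact Or.inl ⟨rfl, rfl⟩
    · exact Or.inr ⟨rfl, rfl⟩
  · rintro (⟨rfl, rfl⟩ | ⟨rfl, rfl⟩)
    · exact ⟨hC.hpa, rfl⟩
    · exact ⟨hC.hpb, rfl⟩

lemma CherryData.outdeg1_p (hC : CherryData M la lb p gp) :
    (M.delVert lb).outdeg p = 1 := by
  unfold outdeg
  rw [hC.arcs1, Finset.filter_erase, hC.out_filter_p, Finset.pair_comm,
    Finset.erase_insert (by simp [hC.ne_ab.symm]), Finset.card_singleton]

lemma CherryData.indeg1_p (hC : CherryData M la lb p gp) :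
    (M.delVert lb).indeg p = 1 := by
  rw [hC.indeg1 hC.ne_plb, hC.p_indeg]

lemma CherryData.deg11 (hC : CherryData M la lb p gp) (v : V)
    (hv : v ∈ (M.delVert lb).verts) :
    ((M.delVert lb).indeg v = 1 ∧ (M.delVert lb).outdeg v = 1) ↔ v = p := by
  have hvlb : v ≠ lb := Finset.ne_of_mem_erase hv
  have hvm : v ∈ M.verts := Finset.mem_of_mem_erase hv
  constructor
  · rintro ⟨h1, h2⟩
    by_contra hvp
    rw [hC.indeg1 hvlb] at h1
    rw [hC.outdeg1 hvp] at h2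
    exact hC.no11 v hvm ⟨h1, h2⟩
  · rintro rfl
    exact ⟨hC.indeg1_p, hC.outdeg1_p⟩

lemma CherryData.endpoints1 (hC : CherryData M la lb p gp) :
    ∀ e ∈ (M.delVert lb).arcs, e.1 ∈ (M.delVert lb).verts ∧ e.2 ∈ (M.delVert lb).verts := by
  rintro ⟨a, b⟩ he
  simp only [delVert, Finset.mem_filter] at he
  obtain ⟨he, h1, h2⟩ := he
  exact ⟨Finset.mem_erase.2 ⟨h1, (hC.endpoints _ he).1⟩,
    Finset.mem_erase.2 ⟨h2, (hC.endpoints _ he).2⟩⟩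

lemma CherryData.noself1 (hC : CherryData M la lb p gp) : (x, x) ∉ (M.delVert lb).arcs := by
  intro h
  exact hC.noself x ((hC.mem_arcs1.1 h).2)

lemma CherryData.path_shape (hC : CherryData M la lb p gp)
    (hl : (M.delVert lb).IsPathList a b l) (hlen : 2 ≤ l.length)
    (hint : ∀ x ∈ (l.drop 1).dropLast,
      (M.delVert lb).indeg x = 1 ∧ (M.delVert lb).outdeg x = 1) :
    (a, b) ∈ (M.delVert lb).arcs ∨
      ((a, p) ∈ (M.delVert lb).arcs ∧ (p, b) ∈ (M.delVert lb).arcs) := by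
  cases hl with
  | nil => simp at hlen
  | cons ha' h' =>
    rename_i w l'
    cases h' with
    | nil => exact Or.inl ha'
    | cons ha2 h2 =>
      rename_i w2 l2
      have hu2 : w = p := by
        have hu2v : w ∈ (M.delVert lb).verts := (hC.endpoints1 _ ha').2
        refine (hC.deg11 w hu2v).1 (hint w ?_)
        obtain ⟨c, t, rfl⟩ := List.exists_cons_of_ne_nil h2.ne_nil
        simp
      cases h2 with
      | nil => exact Or.inr ⟨hu2 ▸ ha', hu2 ▸ ha2⟩
      | cons ha3 h3 =>
        rename_i w3 l3
        exfalso
        have hu3 : w2 = p := by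
          have hu3v : w2 ∈ (M.delVert lb).verts := (hC.endpoints1 _ ha2).2
          refine (hC.deg11 w2 hu3v).1 (hint w2 ?_)
          obtain ⟨c, t, rfl⟩ := List.exists_cons_of_ne_nil h3.ne_nil
          simp
        exact hC.noself1 (hu3 ▸ hu2 ▸ ha2)

lemma CherryData.mem_arcs2 (hC : CherryData M la lb p gp) :
    (a, b) ∈ (M.delVert lb).suppress.arcs ↔
      (a ∈ M.verts ∧ b ∈ M.verts ∧ a ≠ p ∧ a ≠ lb ∧ b ≠ p ∧ b ≠ lb ∧
        ((a, b) ∈ M.arcs ∨ (a = gp ∧ b = la))) := by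
  simp only [suppress, Finset.mem_filter, Finset.mem_product]
  constructor
  · rintro ⟨⟨ha, hb⟩, h1, h2, l, hl, hlen, hint⟩
    have halb : a ≠ lb := Finset.ne_of_mem_erase ha
    have hblb : b ≠ lb := Finset.ne_of_mem_erase hb
    have hap : a ≠ p := fun h => h1 ((hC.deg11 a ha).2 h)
    have hbp : b ≠ p := fun h => h2 ((hC.deg11 b hb).2 h)
    refine ⟨Finset.mem_of_mem_erase ha, Finset.mem_of_mem_erase hb, hap, halb, hbp, hblb, ?_⟩
    rcases hC.path_shape hl hlen hint with h | ⟨hap', hpb'⟩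
    · exact Or.inl (hC.mem_arcs1.1 h).2
    · exact Or.inr ⟨hC.in_p a (hC.mem_arcs1.1 hap').2, by
        rcases hC.out_p b (hC.mem_arcs1.1 hpb').2 with h | h
        · exact h
        · exact absurd h hblb⟩
  · rintro ⟨ham, hbm, hap, halb, hbp, hblb, hd⟩
    have ha1 : a ∈ (M.delVert lb).verts := Finset.mem_erase.2 ⟨halb, ham⟩
    have hb1 : b ∈ (M.delVert lb).verts := Finset.mem_erase.2 ⟨hblb, hbm⟩
    refine ⟨⟨ha1, hb1⟩, fun h => hap ((hC.deg11 a ha1).1 h),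
      fun h => hbp ((hC.deg11 b hb1).1 h), ?_⟩
    rcases hd with hd | ⟨hag, hbl⟩
    · refine ⟨[a, b], ?_, by simp, by simp⟩
      exact .cons (hC.mem_arcs1.2 ⟨fun h => hblb (congrArg Prod.snd h), hd⟩) (.nil b)
    · refine ⟨[a, p, b], ?_, by simp, ?_⟩
      · refine .cons (show (M.delVert lb).Arc a p by
          rw [hag]
          exact hC.mem_arcs1.2 ⟨fun h => hC.ne_plb (congrArg Prod.snd h), hC.hgp⟩) ?_
        exact .cons (show (M.delVert lb).Arc p b by
          rw [hbl]
          exact hC.mem_arcs1.2 ⟨fun h => hC.ne_ab (congrArg Prod.snd h), hC.hpa⟩) (.nil b)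
      · intro x hx
        simp at hx
        subst hx
        exact ⟨hC.indeg1_p, hC.outdeg1_p⟩

lemma CherryData.mem_verts2 (hC : CherryData M la lb p gp) :
    v ∈ (M.delVert lb).suppress.verts ↔ (v ∈ M.verts ∧ v ≠ p ∧ v ≠ lb) := by
  simp only [suppress, Finset.mem_filter]
  constructor
  · rintro ⟨hv, h⟩
    exact ⟨Finset.mem_of_mem_erase hv, fun hvp => h ((hC.deg11 v hv).2 hvp),
      Finset.ne_of_mem_erase hv⟩
  · rintro ⟨hv, hvp, hvlb⟩
    have hv1 : v ∈ (M.delVert lb).verts := Finset.mem_erase.2 ⟨hvlb, hv⟩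
    exact ⟨hv1, fun hd => hvp ((hC.deg11 v hv1).1 hd)⟩

lemma CherryData.leaf2 (hC : CherryData M la lb p gp) {w : V} :
    (M.delVert lb).suppress.IsLeaf w ↔ (M.IsLeaf w ∧ w ≠ lb) := by
  constructor
  · rintro ⟨hwv, hwo⟩
    obtain ⟨hwm, hwp, hwlb⟩ := hC.mem_verts2.1 hwv
    have h0 := Net.outdeg_eq_zero_iff.1 hwo
    refine ⟨⟨hwm, Net.outdeg_eq_zero_iff.2 fun y hy => ?_⟩, hwlb⟩
    by_cases hylb : y = lb
    · exact hwp (hC.in_lb w (hylb ▸ hy))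
    by_cases hyp : y = p
    · subst hyp
      exact h0 la (hC.mem_arcs2.2 ⟨hwm, hC.la_mem, hwp, hwlb, (Ne.symm hC.ne_pla), hC.ne_ab,
        Or.inr ⟨hC.in_p w hy, rfl⟩⟩)
    · exact h0 y (hC.mem_arcs2.2 ⟨hwm, (hC.endpoints _ hy).2, hwp, hwlb, hyp, hylb, Or.inl hy⟩)
  · rintro ⟨⟨hwm, hwo⟩, hwlb⟩
    have hwp : w ≠ p := by
      rintro rfl
      have := hC.p_outdeg
      omega
    refine ⟨hC.mem_verts2.2 ⟨hwm, hwp, hwlb⟩, Net.outdeg_eq_zero_iff.2 fun y hy => ?_⟩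
    rcases (hC.mem_arcs2.1 hy).2.2.2.2.2.2 with h | ⟨rfl, rfl⟩
    · exact Net.outdeg_eq_zero_iff.1 hwo y h
    · exact Net.outdeg_eq_zero_iff.1 hwo p hC.hgp

lemma CherryData.incident2 (hC : CherryData M la lb p gp) {w : V}
    (hw : w ∈ (M.delVert lb).suppress.verts) :
    ∃ e ∈ (M.delVert lb).suppress.arcs, e.1 = w ∨ e.2 = w := by
  obtain ⟨hwm, hwp, hwlb⟩ := hC.mem_verts2.1 hw
  by_cases hwr : w = M.root
  · have hne : (M.arcs.filter (fun e => e.1 = w)).Nonempty := by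
      rw [← Finset.card_pos]
      have h2 := hC.root_out
      unfold outdeg at h2
      rw [hwr]
      omega
    obtain ⟨e, he⟩ := hne
    obtain ⟨hea, he1⟩ := Finset.mem_filter.1 he
    have hwy : (w, e.2) ∈ M.arcs := by rw [← he1]; exact hea
    by_cases hyp : e.2 = p
    · refine ⟨(w, la), hC.mem_arcs2.2 ⟨hwm, hC.la_mem, hwp, hwlb, (Ne.symm hC.ne_pla), hC.ne_ab,
        Or.inr ⟨hC.in_p w (hyp ▸ hwy), rfl⟩⟩, Or.inl rfl⟩
    by_cases hylb : e.2 = lb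
    · exact absurd (hC.in_lb w (hylb ▸ hwy)) hwp
    · exact ⟨(w, e.2), hC.mem_arcs2.2 ⟨hwm, (hC.endpoints _ hwy).2, hwp, hwlb, hyp, hylb,
        Or.inl hwy⟩, Or.inl rfl⟩
  · have h1 : M.indeg w ≠ 0 := by rcases hC.tri w hwm hwr with h | h | h <;> omega
    have hne : (M.arcs.filter (fun e => e.2 = w)).Nonempty := by
      rw [← Finset.card_pos]
      unfold indeg at h1
      omega
    obtain ⟨e, he⟩ := hne
    obtain ⟨hea, he2⟩ := Finset.mem_filter.1 he
    have hxw : (e.1, w) ∈ M.arcs := by rw [← he2]; exact hea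
    by_cases hxp : e.1 = p
    · have : w = la := by
        rcases hC.out_p w (hxp ▸ hxw) with h | h
        · exact h
        · exact absurd h hwlb
      subst this
      exact ⟨(gp, w), hC.mem_arcs2.2 ⟨hC.gp_mem, hC.la_mem, hC.ne_gpp, hC.ne_gplb,
        (Ne.symm hC.ne_pla), hC.ne_ab, Or.inr ⟨rfl, rfl⟩⟩, Or.inr rfl⟩
    by_cases hxlb : e.1 = lb
    · exact absurd hxw (by rw [hxlb]; exact Net.outdeg_eq_zero_iff.1 hC.lb_out w)
    · exact ⟨(e.1, w), hC.mem_arcs2.2 ⟨(hC.endpoints _ hxw).1, hwm, hxp, hxlb, hwp, hwlb,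
        Or.inl hxw⟩, Or.inr rfl⟩

lemma CherryData.arcs2_sub (hC : CherryData M la lb p gp)
    (h : (a, b) ∈ (M.delVert lb).suppress.arcs) (hb : b ≠ la) : (a, b) ∈ M.arcs := by
  rcases (hC.mem_arcs2.1 h).2.2.2.2.2.2 with h' | ⟨rfl, rfl⟩
  · exact h'
  · exact absurd rfl hb

end Net
end Cherry

/-- Let `{a, b}` be a cherry of the rooted binary phylogenetic `X`-tree `T`
(leaves `ta, tb` with common parent `tp`) which is also a cherry of the
phylogenetic network `N` (the corresponding leaves `c ta, c tb` have common
parent `np`), and let `N'` and `T'` be obtained from `N` and `T` by deleting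
leaf `b` with its incident arc and contracting the resulting degree-two
vertex.  Then `N` displays `T` if and only if `N'` displays `T'`. -/
theorem stmt_6 {V W : Type} [DecidableEq V] [DecidableEq W]
    (N : Net V) (T : Net W) (c : W → V)
    (hN : N.IsPhylo) (hT : T.IsPhylo) (hTtree : T.retics = ∅)
    (hc : LeafCorr T N c)
    (ta tb tp : W) (np : V)
    (hta : T.IsLeaf ta) (htb : T.IsLeaf tb) (htab : ta ≠ tb)
    (htpa : T.Arc tp ta) (htpb : T.Arc tp tb)
    (hnpa : N.Arc np (c ta)) (hnpb : N.Arc np (c tb))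
    (htproot : tp ≠ T.root) (hnproot : np ≠ N.root) :
    N.Displays T (fun w x => x = c w) ↔
      ((N.delVert (c tb)).suppress).Displays
        ((T.delVert tb).suppress) (fun w x => x = c w) := by
    classical
  obtain ⟨m, hCN⟩ := Net.mkCherryData hN (hc.1 ta hta) (hc.1 tb htb)
    (fun h => htab (hc.2.1 ta tb hta htb h)) hnpa hnpb hnproot
  obtain ⟨q, hCT⟩ := Net.mkCherryData hT hta htb htab htpa htpb htproot
  have hTend : ∀ e ∈ T.arcs, e.1 ∈ T.verts ∧ e.2 ∈ T.verts := hCT.endpoints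
  constructor
  · rintro ⟨f, P, hinj, hleaf, hpath, hint, hdisj⟩
    have hfta : f ta = c ta := hleaf ta hta
    have hftb : f tb = c tb := hleaf tb htb
    -- f tp = np
    have hftp : f tp = np := by
      by_contra hne
      have key : ∀ (x : W) (v : V), T.Arc tp x → f x = v →
          (∀ z, (z, v) ∈ N.arcs → z = np) → np ∈ internalVerts (P (tp, x)) := by
        intro x v hx hfx hun
        obtain ⟨hp, hlen⟩ := hpath (tp, x) hx
        rw [hfx] at hp
        obtain ⟨l0, y, hP, hay, hpre⟩ := hp.penult hlen
        have hy : y = np := hun y hay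
        subst hy
        cases l0 with
        | nil =>
          exfalso
          have hh := hp.head_eq
          rw [hP] at hh
          simp at hh
          exact hne hh.symm
        | cons c0 t0 =>
          rw [hP, internalVerts_append_pair]
          simp
      have h1 := key ta (c ta) htpa hfta hCN.in_la
      have h2 := key tb (c tb) htpb hftb hCN.in_lb
      exact hdisj (tp, ta) htpa (tp, tb) htpb
        (fun h => htab (congrArg Prod.snd h)) np h1 h2
    -- decompose the path into tp
    obtain ⟨hpq, hlenq⟩ := hpath (q, tp) hCT.hgp
    rw [hftp] at hpq
    obtain ⟨l0, y, hPq, hy, hpre⟩ := hpq.penult hlenq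
    have hym : y = m := hCN.in_p y hy
    -- membership facts for path elements
    have elem : ∀ e ∈ T.arcs, e.1 ≠ tp → e.1 ≠ tb → e.2 ≠ tp → e.2 ≠ tb →
        ∀ x ∈ P e, x ≠ np ∧ x ≠ c tb := by
      intro e he h1 h2 h3 h4 x hx
      obtain ⟨hp, hlen⟩ := hpath e he
      rw [hp.decomp hlen] at hx
      simp at hx
      rcases hx with rfl | hx | rfl
      · constructor
        · intro h; exact h1 (hinj (hTend e he).1 hCT.p_mem (by rw [h, hftp]))
        · intro h; exact h2 (hinj (hTend e he).1 hCT.lb_mem (by rw [h, hftb]))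
      · exact ⟨fun h => hint e he x hx tp hCT.p_mem (hftp.trans h.symm),
          fun h => hint e he x hx tb hCT.lb_mem (hftb.trans h.symm)⟩
      · constructor
        · intro h; exact h3 (hinj (hTend e he).2 hCT.p_mem (by rw [h, hftp]))
        · intro h; exact h4 (hinj (hTend e he).2 hCT.lb_mem (by rw [h, hftb]))
    have trans1 : ∀ (lst : List V) (u v : V), N.IsPathList u v lst →
        (∀ x ∈ lst, x ≠ np ∧ x ≠ c tb) →
        ((N.delVert (c tb)).suppress).IsPathList u v lst := by
      intro lst u v hp hmem
      refine hp.transfer (fun x hx y' hy' hxy => ?_)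
      exact hCN.mem_arcs2.2 ⟨(hCN.endpoints _ hxy).1, (hCN.endpoints _ hxy).2,
        (hmem x hx).1, (hmem x hx).2, (hmem y' hy').1, (hmem y' hy').2, Or.inl hxy⟩
    -- internal vertices of the (q,tp)-path
    have hintq : internalVerts (P (q, tp)) = (l0 ++ [y]).drop 1 := by
      rw [hPq, internalVerts_append_pair]
    have hmem0 : ∀ x ∈ l0 ++ [y], x ≠ np ∧ x ≠ c tb := by
      intro x hx
      cases l0 with
      | nil =>
        simp only [List.nil_append, List.mem_singleton] at hx
        subst hx
        exact ⟨hym ▸ hCN.ne_gpp, hym ▸ hCN.ne_gplb⟩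
      | cons c0 t0 =>
        have hc0 : c0 = f q := by
          have hh := hpre.head_eq
          simp at hh
          exact hh
        rw [List.cons_append, List.mem_cons] at hx
        rcases hx with rfl | hx
        · rw [hc0]
          constructor
          · intro h; exact hCT.ne_gpp (hinj hCT.gp_mem hCT.p_mem (by rw [h, hftp]))
          · intro h; exact hCT.ne_gplb (hinj hCT.gp_mem hCT.lb_mem (by rw [h, hftb]))
        · have hx' : x ∈ internalVerts (P (q, tp)) := by
            rw [hintq]; simpa using hx
          exact ⟨fun h => hint (q, tp) hCT.hgp x hx' tp hCT.p_mem (hftp.trans h.symm),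
            fun h => hint (q, tp) hCT.hgp x hx' tb hCT.lb_mem (hftb.trans h.symm)⟩
    -- the new path for (q, ta)
    have hnewpath : ((N.delVert (c tb)).suppress).IsPathList (f q) (c ta) (l0 ++ [y, c ta]) := by
      have hp1 : ((N.delVert (c tb)).suppress).IsPathList (f q) y (l0 ++ [y]) :=
        trans1 _ _ _ hpre hmem0
      have harc : ((N.delVert (c tb)).suppress).Arc y (c ta) := by
        rw [hym]
        exact hCN.mem_arcs2.2 ⟨hCN.gp_mem, hCN.la_mem, hCN.ne_gpp, hCN.ne_gplb,
          Ne.symm hCN.ne_pla, hCN.ne_ab, Or.inr ⟨rfl, rfl⟩⟩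
      have hres := hp1.snoc harc
      rwa [List.append_assoc] at hres
    -- characterization of T' arcs
    have hT2sub : ∀ e1 e2 : W, (e1, e2) ∈ ((T.delVert tb).suppress).arcs →
        (e1, e2) ≠ (q, ta) →
        ((e1, e2) ∈ T.arcs ∧ e1 ≠ tp ∧ e1 ≠ tb ∧ e2 ≠ tp ∧ e2 ≠ tb) := by
      intro e1 e2 he hne
      obtain ⟨h1, h2, h3, h4, h5, h6, hd'⟩ := hCT.mem_arcs2.1 he
      rcases hd' with hd' | ⟨rfl, rfl⟩
      · exact ⟨hd', h3, h4, h5, h6⟩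
      · exact absurd rfl hne
    set P' : W × W → List V := fun e => if e = (q, ta) then l0 ++ [y, c ta] else P e
      with hP'
    have hP'eq1 : P' (q, ta) = l0 ++ [y, c ta] := by simp [hP']
    have hP'eq2 : ∀ e : W × W, e ≠ (q, ta) → P' e = P e := by
      intro e he; simp [hP', he]
    have hP'int : ∀ e1 e2 : W, (e1, e2) ∈ ((T.delVert tb).suppress).arcs →
        internalVerts (P' (e1, e2)) =
          internalVerts (P (if (e1, e2) = (q, ta) then (q, tp) else (e1, e2))) := by
      intro e1 e2 he
      by_cases hcase : (e1, e2) = (q, ta)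
      · rw [if_pos hcase, hcase, hP'eq1, internalVerts_append_pair, hPq,
          internalVerts_append_pair]
      · rw [if_neg hcase, hP'eq2 _ hcase]
    have horig : ∀ e1 e2 : W, (e1, e2) ∈ ((T.delVert tb).suppress).arcs →
        (if (e1, e2) = (q, ta) then (q, tp) else (e1, e2)) ∈ T.arcs := by
      intro e1 e2 he
      by_cases hcase : (e1, e2) = (q, ta)
      · rw [if_pos hcase]; exact hCT.hgp
      · rw [if_neg hcase]; exact (hT2sub e1 e2 he hcase).1
    refine ⟨f, P', ?_, ?_, ?_, ?_, ?_⟩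
    · intro x hx y' hy' h
      exact hinj (hCT.mem_verts2.1 hx).1 (hCT.mem_verts2.1 hy').1 h
    · intro w hw
      exact hleaf w (hCT.leaf2.1 hw).1
    · rintro ⟨e1, e2⟩ he
      by_cases hcase : (e1, e2) = (q, ta)
      · rw [hcase, hP'eq1]
        refine ⟨?_, by simp⟩
        rw [show f (q, ta).2 = c ta from hfta]
        exact hnewpath
      · rw [hP'eq2 _ hcase]
        obtain ⟨he', h1, h2, h3, h4⟩ := hT2sub e1 e2 he hcase
        exact ⟨trans1 _ _ _ (hpath _ he').1 (elem _ he' h1 h2 h3 h4), (hpath _ he').2⟩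
    · rintro ⟨e1, e2⟩ he x hx w hw
      rw [hP'int e1 e2 he] at hx
      exact hint _ (horig e1 e2 he) x hx w (hCT.mem_verts2.1 hw).1
    · rintro ⟨e1, e2⟩ he ⟨e1', e2'⟩ he' hne x hx hx'
      rw [hP'int e1 e2 he] at hx
      rw [hP'int e1' e2' he'] at hx'
      have hnemap : (if (e1, e2) = (q, ta) then (q, tp) else (e1, e2)) ≠
          (if (e1', e2') = (q, ta) then (q, tp) else (e1', e2')) := by
        by_cases hcase : (e1, e2) = (q, ta) <;> by_cases hcase' : (e1', e2') = (q, ta)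
        · exact absurd (hcase.trans hcase'.symm) hne
        · rw [if_pos hcase, if_neg hcase']
          intro h
          exact (hT2sub e1' e2' he' hcase').2.2.2.1 (congrArg Prod.snd h).symm
        · rw [if_neg hcase, if_pos hcase']
          intro h
          exact (hT2sub e1 e2 he hcase).2.2.2.1 (congrArg Prod.snd h)
        · rw [if_neg hcase, if_neg hcase']; exact hne
      exact hdisj _ (horig e1 e2 he) _ (horig e1' e2' he') hnemap x hx hx'
  · rintro ⟨g, Q, hinj, hleaf, hpath, hint, hdisj⟩
    have hta2 : ((T.delVert tb).suppress).IsLeaf ta := hCT.leaf2.2 ⟨hta, htab⟩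
    have hta2v : ta ∈ ((T.delVert tb).suppress).verts := hta2.1
    have hgta : g ta = c ta := hleaf ta hta2
    have hq2v : q ∈ ((T.delVert tb).suppress).verts :=
      hCT.mem_verts2.2 ⟨hCT.gp_mem, hCT.ne_gpp, hCT.ne_gplb⟩
    have hqta2 : (q, ta) ∈ ((T.delVert tb).suppress).arcs :=
      hCT.mem_arcs2.2 ⟨hCT.gp_mem, hCT.la_mem, hCT.ne_gpp, hCT.ne_gplb,
        Ne.symm hCT.ne_pla, hCT.ne_ab, Or.inr ⟨rfl, rfl⟩⟩
    have hqtaT : (q, ta) ∉ T.arcs := fun h => hCT.ne_gpp (hCT.in_la q h)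
    have arcs2vert : ∀ e1 e2 : W, (e1, e2) ∈ ((T.delVert tb).suppress).arcs →
        e1 ∈ ((T.delVert tb).suppress).verts ∧ e2 ∈ ((T.delVert tb).suppress).verts := by
      intro e1 e2 he
      obtain ⟨h1, h2, h3, h4, h5, h6, -⟩ := hCT.mem_arcs2.1 he
      exact ⟨hCT.mem_verts2.2 ⟨h1, h3, h4⟩, hCT.mem_verts2.2 ⟨h2, h5, h6⟩⟩
    -- elements of N2-paths
    have elemN2 : ∀ (lst : List V) (u v : V),
        ((N.delVert (c tb)).suppress).IsPathList u v lst → 2 ≤ lst.length →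
        ∀ x ∈ lst, x ∈ N.verts ∧ x ≠ np ∧ x ≠ c tb := by
      intro lst u v hp hlen x hx
      obtain ⟨y', hy'⟩ := hp.mem_arc hlen hx
      rcases hy' with h | h
      · obtain ⟨a1, a2, a3, a4, a5, a6, -⟩ := hCN.mem_arcs2.1 h
        exact ⟨a1, a3, a4⟩
      · obtain ⟨a1, a2, a3, a4, a5, a6, -⟩ := hCN.mem_arcs2.1 h
        exact ⟨a2, a5, a6⟩
    -- image facts
    have himg : ∀ w, w ∈ ((T.delVert tb).suppress).verts →
        g w ∈ N.verts ∧ g w ≠ np ∧ g w ≠ c tb := by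
      intro w hw
      obtain ⟨e, he, hor⟩ := hCT.incident2 hw
      obtain ⟨hp, hlen⟩ := hpath e he
      have hdec := hp.decomp hlen
      rcases hor with h | h
      · refine elemN2 _ _ _ hp hlen (g w) ?_
        rw [hdec, ← h]
        simp
      · refine elemN2 _ _ _ hp hlen (g w) ?_
        rw [hdec, ← h]
        simp
    -- translation of N2 paths to N paths
    have transQ : ∀ (lst : List V) (u v : V),
        ((N.delVert (c tb)).suppress).IsPathList u v lst →
        (∀ x ∈ lst, x ≠ c ta) → N.IsPathList u v lst := by
      intro lst u v hp hmem
      refine hp.transfer (fun x hx y' hy' hxy => ?_)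
      exact hCN.arcs2_sub hxy (hmem y' hy')
    -- no c ta in paths of arcs not ending at ta
    have noca : ∀ e1 e2 : W, (e1, e2) ∈ ((T.delVert tb).suppress).arcs → e2 ≠ ta →
        ∀ x ∈ Q (e1, e2), x ≠ c ta := by
      intro e1 e2 he hne x hx
      obtain ⟨hp, hlen⟩ := hpath (e1, e2) he
      rw [hp.decomp hlen] at hx
      simp at hx
      obtain ⟨hv1, hv2⟩ := arcs2vert e1 e2 he
      rcases hx with rfl | hx | rfl
      · intro h
        have he1ta : e1 = ta := hinj hv1 hta2v (by rw [hgta]; exact h)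
        subst he1ta
        obtain ⟨-, -, -, -, -, -, hd'⟩ := hCT.mem_arcs2.1 he
        rcases hd' with hd' | ⟨h1, h2⟩
        · exact Net.outdeg_eq_zero_iff.1 hta.2 e2 hd'
        · exact hCT.ne_gpla h1.symm
      · intro h
        exact hint (e1, e2) he x hx ta hta2v (hgta.trans h.symm)
      · intro h
        exact hne (hinj hv2 hta2v (by rw [hgta]; exact h))
    -- decompose Q (q, ta)
    obtain ⟨hpqa, hlenqa⟩ := hpath (q, ta) hqta2
    rw [show g (q, ta).2 = c ta from hgta] at hpqa
    obtain ⟨l0, y, hPQ, hyarc, hpre⟩ := hpqa.penult hlenqa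
    have hyfacts := hCN.mem_arcs2.1 hyarc
    have hynp : (y, np) ∈ N.arcs := by
      rcases hyfacts.2.2.2.2.2.2 with h | ⟨h1, h2⟩
      · exact absurd (hCN.in_la y h) hyfacts.2.2.1
      · rw [h1]; exact hCN.hgp
    have hyca : y ≠ c ta := fun h => Net.outdeg_eq_zero_iff.1 hCN.la_out np (h ▸ hynp)
    have hintqa : internalVerts (Q (q, ta)) = (l0 ++ [y]).drop 1 := by
      rw [hPQ, internalVerts_append_pair]
    have hmem0 : ∀ x ∈ l0 ++ [y], x ≠ c ta := by
      intro x hx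
      cases l0 with
      | nil =>
        simp only [List.nil_append, List.mem_singleton] at hx
        subst hx
        exact hyca
      | cons c0 t0 =>
        have hc0 : c0 = g q := by
          have hh := hpre.head_eq
          simp at hh
          exact hh
        rw [List.cons_append, List.mem_cons] at hx
        rcases hx with rfl | hx
        · rw [hc0]
          intro h
          exact hCT.ne_gpla (hinj hq2v hta2v (by rw [hgta]; exact h))
        · have hx' : x ∈ internalVerts (Q (q, ta)) := by
            rw [hintqa]; simpa using hx
          exact fun h => hint (q, ta) hqta2 x hx' ta hta2v (hgta.trans h.symm)
    -- the path for (q, tp) in N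
    have hqtppath : N.IsPathList (g q) np (l0 ++ [y, np]) := by
      have hp1 : N.IsPathList (g q) y (l0 ++ [y]) := transQ _ _ _ hpre hmem0
      have hres := hp1.snoc hynp
      rwa [List.append_assoc] at hres
    -- classification of T arcs
    have classify : ∀ e1 e2 : W, (e1, e2) ∈ T.arcs →
        (e1, e2) = (tp, ta) ∨ (e1, e2) = (tp, tb) ∨ (e1, e2) = (q, tp) ∨
        ((e1, e2) ∈ ((T.delVert tb).suppress).arcs ∧ (e1, e2) ≠ (q, ta) ∧
          e1 ≠ tp ∧ e1 ≠ tb ∧ e2 ≠ tp ∧ e2 ≠ tb ∧ e2 ≠ ta) := by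
      intro e1 e2 he
      by_cases h1 : e1 = tp
      · subst h1
        rcases hCT.out_p e2 he with rfl | rfl
        · exact Or.inl rfl
        · exact Or.inr (Or.inl rfl)
      by_cases h2 : e2 = tp
      · subst h2
        rw [hCT.in_p e1 he]
        exact Or.inr (Or.inr (Or.inl rfl))
      by_cases h3 : e1 = tb
      · exact absurd he (by rw [h3]; exact Net.outdeg_eq_zero_iff.1 hCT.lb_out e2)
      by_cases h4 : e2 = tb
      · exact absurd (hCT.in_lb e1 (h4 ▸ he)) h1
      have h5 : e2 ≠ ta := fun h => h1 (hCT.in_la e1 (h ▸ he))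
      refine Or.inr (Or.inr (Or.inr ⟨?_, ?_, h1, h3, h2, h4, h5⟩))
      · exact hCT.mem_arcs2.2 ⟨(hTend _ he).1, (hTend _ he).2, h1, h3, h2, h4, Or.inl he⟩
      · intro h; exact hqtaT (h ▸ he)
    -- the displaying map
    set f : W → V := fun w => if w = tb then c tb else if w = tp then np else g w
      with hf
    have hftb' : f tb = c tb := by simp [hf]
    have hftp' : f tp = np := by simp [hf, hCT.ne_plb]
    have hfw : ∀ w, w ≠ tb → w ≠ tp → f w = g w := by
      intro w h1 h2; simp [hf, h1, h2]
    have hfta' : f ta = c ta := by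
      rw [hfw ta hCT.ne_ab (Ne.symm hCT.ne_pla)]; exact hgta
    have hfq : f q = g q := hfw q hCT.ne_gplb hCT.ne_gpp
    set P : W × W → List V := fun e =>
      if e = (tp, ta) then [np, c ta]
      else if e = (tp, tb) then [np, c tb]
      else if e = (q, tp) then l0 ++ [y, np]
      else Q e with hP
    have hPeq1 : P (tp, ta) = [np, c ta] := by simp [hP]
    have hPeq2 : P (tp, tb) = [np, c tb] := by
      simp [hP, Prod.ext_iff, Ne.symm htab]
    have hPeq3 : P (q, tp) = l0 ++ [y, np] := by
      simp [hP, Prod.ext_iff, hCT.ne_pla, hCT.ne_plb]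
    have hPeq4 : ∀ e : W × W, e ≠ (tp, ta) → e ≠ (tp, tb) → e ≠ (q, tp) →
        P e = Q e := by
      intro e h1 h2 h3; simp [hP, h1, h2, h3]
    -- equality of internal vertex lists for (q,tp)
    have hint3 : internalVerts (P (q, tp)) = internalVerts (Q (q, ta)) := by
      rw [hPeq3, internalVerts_append_pair, hintqa]
    refine ⟨f, P, ?_, ?_, ?_, ?_, ?_⟩
    · -- injectivity
      intro w hw w' hw' h
      simp only [Set.mem_setOf_eq] at hw hw'
      by_cases e1 : w = tb <;> by_cases e2 : w' = tb
      · rw [e1, e2]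
      · exfalso
        rw [e1, hftb'] at h
        by_cases e3 : w' = tp
        · rw [e3, hftp'] at h; exact hCN.ne_plb h.symm
        · rw [hfw w' e2 e3] at h
          exact (himg w' (hCT.mem_verts2.2 ⟨hw', e3, e2⟩)).2.2 h.symm
      · exfalso
        rw [e2, hftb'] at h
        by_cases e3 : w = tp
        · rw [e3, hftp'] at h; exact hCN.ne_plb h
        · rw [hfw w e1 e3] at h
          exact (himg w (hCT.mem_verts2.2 ⟨hw, e3, e1⟩)).2.2 h
      · by_cases e3 : w = tp <;> by_cases e4 : w' = tp
        · rw [e3, e4]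
        · exfalso
          rw [e3, hftp', hfw w' e2 e4] at h
          exact (himg w' (hCT.mem_verts2.2 ⟨hw', e4, e2⟩)).2.1 h.symm
        · exfalso
          rw [e4, hftp', hfw w e1 e3] at h
          exact (himg w (hCT.mem_verts2.2 ⟨hw, e3, e1⟩)).2.1 h
        · rw [hfw w e1 e3, hfw w' e2 e4] at h
          exact hinj (show w ∈ {w | w ∈ ((T.delVert tb).suppress).verts} from
            hCT.mem_verts2.2 ⟨hw, e3, e1⟩)
            (show w' ∈ {w | w ∈ ((T.delVert tb).suppress).verts} from
            hCT.mem_verts2.2 ⟨hw', e4, e2⟩) h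
    · -- leaves
      intro w hw
      by_cases e1 : w = tb
      · rw [e1, hftb']
      · have e3 : w ≠ tp := by
          rintro rfl
          have := hCT.p_outdeg
          have := hw.2
          omega
        rw [hfw w e1 e3]
        exact hleaf w (hCT.leaf2.2 ⟨hw, e1⟩)
    · -- paths
      rintro ⟨e1, e2⟩ he
      rcases classify e1 e2 he with hcase | hcase | hcase | ⟨he2, hne, h1, h2, h3, h4, h5⟩
      · rw [hcase, hPeq1]
        refine ⟨?_, by simp⟩
        show N.IsPathList (f tp) (f ta) [np, c ta]
        rw [hftp', hfta']
        exact .cons hnpa (.nil _)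
      · rw [hcase, hPeq2]
        refine ⟨?_, by simp⟩
        show N.IsPathList (f tp) (f tb) [np, c tb]
        rw [hftp', hftb']
        exact .cons hnpb (.nil _)
      · rw [hcase, hPeq3]
        refine ⟨?_, by simp⟩
        show N.IsPathList (f q) (f tp) (l0 ++ [y, np])
        rw [hfq, hftp']
        exact hqtppath
      · rw [hPeq4 (e1, e2) (fun h => h1 (congrArg Prod.fst h))
          (fun h => h1 (congrArg Prod.fst h)) (fun h => h3 (congrArg Prod.snd h))]
        refine ⟨?_, (hpath _ he2).2⟩
        show N.IsPathList (f e1) (f e2) (Q (e1, e2))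
        rw [hfw e1 h2 h1, hfw e2 h4 h3]
        exact transQ _ _ _ (hpath _ he2).1 (noca e1 e2 he2 h5)
    · -- internal vertices avoid images
      rintro ⟨e1, e2⟩ he x hx w hw
      rcases classify e1 e2 he with hcase | hcase | hcase | ⟨he2, hne, h1, h2, h3, h4, h5⟩
      · rw [hcase, hPeq1] at hx
        simp [internalVerts] at hx
      · rw [hcase, hPeq2] at hx
        simp [internalVerts] at hx
      · rw [hcase, hint3] at hx
        have hxQ : x ∈ Q (q, ta) := internalVerts_subset hx
        have hxf := elemN2 _ _ _ hpqa hlenqa x hxQ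
        by_cases hwtb : w = tb
        · rw [hwtb, hftb']
          exact Ne.symm hxf.2.2
        by_cases hwtp : w = tp
        · rw [hwtp, hftp']
          exact Ne.symm hxf.2.1
        · rw [hfw w hwtb hwtp]
          exact hint (q, ta) hqta2 x hx w (hCT.mem_verts2.2 ⟨hw, hwtp, hwtb⟩)
      · rw [hPeq4 (e1, e2) (fun h => h1 (congrArg Prod.fst h))
          (fun h => h1 (congrArg Prod.fst h)) (fun h => h3 (congrArg Prod.snd h))] at hx
        have hxQ : x ∈ Q (e1, e2) := internalVerts_subset hx
        have hxf := elemN2 _ _ _ (hpath _ he2).1 (hpath _ he2).2 x hxQ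
        by_cases hwtb : w = tb
        · rw [hwtb, hftb']
          exact Ne.symm hxf.2.2
        by_cases hwtp : w = tp
        · rw [hwtp, hftp']
          exact Ne.symm hxf.2.1
        · rw [hfw w hwtb hwtp]
          exact hint (e1, e2) he2 x hx w (hCT.mem_verts2.2 ⟨hw, hwtp, hwtb⟩)
    · -- internal disjointness
      have map5 : ∀ a1 a2 : W, (a1, a2) ∈ T.arcs → ∀ z, z ∈ internalVerts (P (a1, a2)) →
          (if (a1, a2) = (q, tp) then (q, ta) else (a1, a2)) ∈
            ((T.delVert tb).suppress).arcs ∧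
          z ∈ internalVerts (Q (if (a1, a2) = (q, tp) then (q, ta) else (a1, a2))) := by
        intro a1 a2 ha z hz
        rcases classify a1 a2 ha with hcase | hcase | hcase | ⟨ha2, hne', h1, h2, h3, h4, h5⟩
        · rw [hcase, hPeq1] at hz
          simp [internalVerts] at hz
        · rw [hcase, hPeq2] at hz
          simp [internalVerts] at hz
        · rw [if_pos hcase]
          refine ⟨hqta2, ?_⟩
          rw [hcase, hint3] at hz
          exact hz
        · have hne3 : (a1, a2) ≠ (q, tp) := fun h => h3 (congrArg Prod.snd h)
          rw [if_neg hne3]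
          refine ⟨ha2, ?_⟩
          rwa [hPeq4 (a1, a2) (fun h => h1 (congrArg Prod.fst h))
            (fun h => h1 (congrArg Prod.fst h)) hne3] at hz
      rintro ⟨e1, e2⟩ he ⟨e1', e2'⟩ he' hne x hx hx'
      have hm1 := map5 e1 e2 he x hx
      have hm2 := map5 e1' e2' he' x hx'
      have hnemap : (if (e1, e2) = (q, tp) then (q, ta) else (e1, e2)) ≠
          (if (e1', e2') = (q, tp) then (q, ta) else (e1', e2')) := by
        by_cases hcase : (e1, e2) = (q, tp) <;> by_cases hcase' : (e1', e2') = (q, tp)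
        · exact absurd (hcase.trans hcase'.symm) hne
        · rw [if_pos hcase, if_neg hcase']
          intro h
          exact hqtaT (by rw [h]; exact he')
        · rw [if_neg hcase, if_pos hcase']
          intro h
          exact hqtaT (by rw [← h]; exact he)
        · rw [if_neg hcase, if_neg hcase']
          exact hne
      exact hdisj _ hm1.1 _ hm2.1 hnemap x hm1.2 hm2.2
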